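/- Let S be a finite list of finite sets (schemas) sorted in non-increasing order of cardinality. Process the sets in order, maintaining a list of 'centers': if the current set is a subset of some existing center, add it as a member to every cluster whose center contains it; otherwise make it a new center (and a member of its own cluster). Then add a directed edge from x to y whenever x and y are members of a common cluster and y ⊆ x. Theorem: for every pair of sets A, B in S with A ⊆ B, the resulting graph contains the edge B → A; i.e., no containment edge is missed. -/

import Mathlib

variable {α : Type*} [DecidableEq α]

/-- One step of the SGB algorithm: process schema set `s` against the current list of
clusters (each cluster is a pair `(center, members)`).  If `s` is contained in some
existing center, add it as a member of every cluster whose center contains it;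
otherwise make it a new center (and a member of its own cluster). -/
def sgbStep (clusters : List (Finset α × List (Finset α))) (s : Finset α) :
    List (Finset α × List (Finset α)) :=
  if clusters.any (fun c => decide (s ⊆ c.1)) then
    clusters.map (fun c => if s ⊆ c.1 then (c.1, s :: c.2) else c)
  else
    clusters ++ [(s, [s])]

lemma sgbStep_mono (clusters : List (Finset α × List (Finset α))) (s : Finset α)
    (c : Finset α × List (Finset α)) (hc : c ∈ clusters) :
    ∃ c' ∈ sgbStep clusters s, c'.1 = c.1 ∧ (∀ x ∈ c.2, x ∈ c'.2) ∧ (s ⊆ c.1 → s ∈ c'.2) := by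
  unfold sgbStep
  by_cases h : clusters.any (fun c => decide (s ⊆ c.1))
  · simp only [h, if_true]
    refine ⟨_, List.mem_map_of_mem hc, ?_⟩
    by_cases hs : s ⊆ c.1
    · rw [if_pos hs]
      exact ⟨rfl, fun x hx => List.mem_cons_of_mem _ hx, fun _ => List.mem_cons_self⟩
    · rw [if_neg hs]
      exact ⟨rfl, fun x hx => hx, fun h' => absurd h' hs⟩
  · simp only [h, if_false]
    refine ⟨c, List.mem_append_left _ hc, rfl, fun x hx => hx, fun hs => ?_⟩
    exact (h (List.any_eq_true.mpr ⟨c, hc, decide_eq_true hs⟩)).elim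

lemma sgbStep_self (clusters : List (Finset α × List (Finset α))) (s : Finset α) :
    ∃ c ∈ sgbStep clusters s, s ∈ c.2 ∧ s ⊆ c.1 := by
  unfold sgbStep
  by_cases h : clusters.any (fun c => decide (s ⊆ c.1))
  · simp only [h, if_true]
    obtain ⟨c, hc, hs⟩ := List.any_eq_true.mp h
    simp only [decide_eq_true_eq] at hs
    refine ⟨_, List.mem_map_of_mem hc, ?_⟩
    simp [hs]
  · simp only [h, if_false]
    exact ⟨(s, [s]), List.mem_append_right _ (by simp), by simp, subset_rfl⟩

lemma sgbFoldl_mono (L : List (Finset α)) (clusters : List (Finset α × List (Finset α)))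
    (c : Finset α × List (Finset α)) (hc : c ∈ clusters) :
    ∃ c' ∈ L.foldl sgbStep clusters, c'.1 = c.1 ∧ (∀ x ∈ c.2, x ∈ c'.2) := by
  induction L generalizing clusters c with
  | nil => exact ⟨c, hc, rfl, fun x hx => hx⟩
  | cons s L ih =>
    obtain ⟨c', hc', h1, h2, _⟩ := sgbStep_mono clusters s c hc
    obtain ⟨c'', hc'', h1', h2'⟩ := ih _ c' hc'
    exact ⟨c'', hc'', h1'.trans h1, fun x hx => h2' x (h2 x hx)⟩

/-- The clusters produced by SGB after processing the list `S` in order. -/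
def sgbClusters (S : List (Finset α)) : List (Finset α × List (Finset α)) :=
  S.foldl sgbStep []

/-- The schema containment graph built by SGB: there is a directed edge from `x` to `y`
iff `x` and `y` are members of a common cluster and `y ⊆ x`. -/
def sgbEdge (S : List (Finset α)) (x y : Finset α) : Prop :=
  ∃ c ∈ sgbClusters S, x ∈ c.2 ∧ y ∈ c.2 ∧ y ⊆ x

/-- **SGB misses no containment edge**: if the schemas are processed in non-increasing
order of cardinality, then for every `A, B` in the list with `A ⊆ B`, the resulting
graph contains the edge `B → A`. -/
theorem sgb_no_missing_edges (S : List (Finset α))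
    (hsorted : S.Pairwise (fun a b => b.card ≤ a.card))
    (A B : Finset α) (hA : A ∈ S) (hB : B ∈ S) (hAB : A ⊆ B) :
    sgbEdge S B A := by
  obtain ⟨l1, l2, rfl⟩ := List.append_of_mem hB
  -- after processing l1 ++ [B], B is a member of some cluster with B ⊆ center
  have key : ∃ c ∈ (l1 ++ [B]).foldl sgbStep ([] : List (Finset α × List (Finset α))),
      B ∈ c.2 ∧ B ⊆ c.1 := by
    rw [List.foldl_append]
    exact sgbStep_self _ B
  by_cases hAB' : A = B
  · subst hAB'
    obtain ⟨c, hc, hBc, _⟩ := key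
    obtain ⟨c', hc', _, h2⟩ := sgbFoldl_mono l2 _ c hc
    refine ⟨c', ?_, h2 _ hBc, h2 _ hBc, subset_rfl⟩
    simpa [sgbClusters, List.foldl_append] using hc'
  · -- A appears in l2
    have hcard : A.card < B.card := Finset.card_lt_card (lt_of_le_of_ne hAB hAB')
    have hAl2 : A ∈ l2 := by
      rcases List.mem_append.mp hA with h | h
      · exfalso
        have := (List.pairwise_append.mp hsorted).2.2 A h B (by simp)
        omega
      · rcases List.mem_cons.mp h with h | h
        · exact absurd h hAB'
        · exact h
    obtain ⟨l3, l4, rfl⟩ := List.append_of_mem hAl2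
    obtain ⟨c, hc, hBc, hBsub⟩ := key
    -- push through l3
    obtain ⟨c1, hc1, h1, h2⟩ := sgbFoldl_mono l3 _ c hc
    -- process A
    obtain ⟨c2, hc2, h1', h2', h3'⟩ := sgbStep_mono _ A c1 hc1
    have hAc2 : A ∈ c2.2 := h3' (by rw [h1]; exact hAB.trans hBsub)
    have hBc2 : B ∈ c2.2 := h2' _ (h2 _ hBc)
    -- push through l4
    obtain ⟨c3, hc3, _, h2''⟩ := sgbFoldl_mono l4 _ c2 hc2
    refine ⟨c3, ?_, h2'' _ hBc2, h2'' _ hAc2, hAB⟩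
    simp only [sgbClusters, List.foldl_append, List.foldl_cons]
    simpa [List.foldl_append] using hc3
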